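/- Let d ≥ 1 and let A be an m×n row-stochastic real matrix with a quantum implementation in dimension d. If the d×d identity matrix I_d is ultraweakly majorized by A (there exist row-stochastic L, R with L·A·R = I_d), then A is ultraweakly majorized by I_d as well (there exist row-stochastic L', R' with L'·I_d·R' = A); that is, A is ultraweakly equivalent to I_d, so the equivalence class of I_d is maximal among quantum communication matrices in dimension d. -/

import Mathlib

open Matrix BigOperators
open scoped ComplexOrder

/-- A real matrix is row-stochastic if all entries are nonnegative
and each row sums to 1. -/
def RowStochastic {m n : ℕ} (A : Matrix (Fin m) (Fin n) ℝ) : Prop :=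
  (∀ i j, 0 ≤ A i j) ∧ ∀ i, ∑ j, A i j = 1

/-- `A` admits a quantum implementation in dimension `d`: there are states
`ρ i` (PSD, trace one) and POVM effects `M j` (PSD, summing to the identity)
with `A i j = Re (tr (ρ i * M j))`. -/
def QuantumImpl (d m n : ℕ) (A : Matrix (Fin m) (Fin n) ℝ) : Prop :=
  ∃ (ρ : Fin m → Matrix (Fin d) (Fin d) ℂ) (M : Fin n → Matrix (Fin d) (Fin d) ℂ),
    (∀ i, (ρ i).PosSemidef ∧ (ρ i).trace = 1) ∧
    (∀ j, (M j).PosSemidef) ∧ (∑ j, M j = 1) ∧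
    (∀ i j, A i j = ((ρ i * M j).trace).re)

/-- The max monotone `λmax(A) = Σ_j max_i A i j`. -/
noncomputable def lmax {m n : ℕ} (A : Matrix (Fin m) (Fin n) ℝ) : ℝ :=
  ∑ j, ⨆ i, A i j

/-- The min monotone `λmin(A) = −Σ_j min_i A i j`. -/
noncomputable def lmin {m n : ℕ} (A : Matrix (Fin m) (Fin n) ℝ) : ℝ :=
  - ∑ j, ⨅ i, A i j

/-- `UWMaj B A` : `B` is ultraweakly majorized by `A` (i.e. `B ⪯ A`),
meaning `B = L * A * R` for some row-stochastic `L`, `R`. -/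
def UWMaj {m' n' m n : ℕ} (B : Matrix (Fin m') (Fin n') ℝ)
    (A : Matrix (Fin m) (Fin n) ℝ) : Prop :=
  ∃ (L : Matrix (Fin m') (Fin m) ℝ) (R : Matrix (Fin n) (Fin n') ℝ),
    RowStochastic L ∧ RowStochastic R ∧ L * A * R = B

namespace IdClassMaximalAux

variable {d : ℕ}

/- paste of earlier aux (assumed compiled) -/
lemma trace_conjTranspose_mul_self_nonneg (D : Matrix (Fin d) (Fin d) ℂ) :
    0 ≤ (Dᴴ * D).trace := by
  rw [Matrix.trace]
  refine Finset.sum_nonneg fun i _ => ?_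
  rw [Matrix.diag_apply, Matrix.mul_apply]
  exact Finset.sum_nonneg fun k _ => by
    rw [Matrix.conjTranspose_apply]; exact star_mul_self_nonneg _

lemma eq_zero_of_trace_conjTranspose_mul_self (D : Matrix (Fin d) (Fin d) ℂ)
    (h : (Dᴴ * D).trace = 0) : D = 0 := by
  rw [Matrix.trace] at h
  have h1 := (Finset.sum_eq_zero_iff_of_nonneg (fun i _ => by
    rw [Matrix.diag_apply, Matrix.mul_apply]
    exact Finset.sum_nonneg fun k _ => by
      rw [Matrix.conjTranspose_apply]; exact star_mul_self_nonneg _)).mp h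
  ext k i
  have h2 := h1 i (Finset.mem_univ i)
  rw [Matrix.diag_apply, Matrix.mul_apply] at h2
  have h3 := (Finset.sum_eq_zero_iff_of_nonneg (fun k _ => by
    rw [Matrix.conjTranspose_apply]; exact star_mul_self_nonneg _)).mp h2
  have h4 := h3 k (Finset.mem_univ k)
  rw [Matrix.conjTranspose_apply] at h4
  rcases mul_eq_zero.mp h4 with h5 | h5
  · simpa using star_eq_zero.mp h5
  · simpa using h5

lemma trace_mul_psd_nonneg {X Y : Matrix (Fin d) (Fin d) ℂ}
    (hX : X.PosSemidef) (hY : Y.PosSemidef) : 0 ≤ (X * Y).trace := by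
  obtain ⟨B, rfl⟩ : ∃ B : Matrix (Fin d) (Fin d) ℂ, X = Bᴴ * B := by
    open scoped MatrixOrder in
    obtain ⟨B, hB⟩ := CStarAlgebra.nonneg_iff_eq_star_mul_self.mp hX.nonneg
    exact ⟨B, hB⟩
  obtain ⟨C, rfl⟩ : ∃ C : Matrix (Fin d) (Fin d) ℂ, Y = Cᴴ * C := by
    open scoped MatrixOrder in
    obtain ⟨C, hC⟩ := CStarAlgebra.nonneg_iff_eq_star_mul_self.mp hY.nonneg
    exact ⟨C, hC⟩
  have key : (Bᴴ * B * (Cᴴ * C)).trace = ((C * Bᴴ)ᴴ * (C * Bᴴ)).trace := by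
    rw [Matrix.conjTranspose_mul, Matrix.conjTranspose_conjTranspose]
    rw [show Bᴴ * B * (Cᴴ * C) = Bᴴ * (B * Cᴴ * C) by noncomm_ring]
    rw [Matrix.trace_mul_comm, show B * Cᴴ * C * Bᴴ = B * Cᴴ * (C * Bᴴ) by noncomm_ring]
  rw [key]
  exact trace_conjTranspose_mul_self_nonneg _

lemma mul_eq_zero_of_trace_zero {X Y : Matrix (Fin d) (Fin d) ℂ}
    (hX : X.PosSemidef) (hY : Y.PosSemidef) (h : (X * Y).trace = 0) : X * Y = 0 := by
  obtain ⟨B, rfl⟩ : ∃ B : Matrix (Fin d) (Fin d) ℂ, X = Bᴴ * B := by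
    open scoped MatrixOrder in
    obtain ⟨B, hB⟩ := CStarAlgebra.nonneg_iff_eq_star_mul_self.mp hX.nonneg
    exact ⟨B, hB⟩
  obtain ⟨C, rfl⟩ : ∃ C : Matrix (Fin d) (Fin d) ℂ, Y = Cᴴ * C := by
    open scoped MatrixOrder in
    obtain ⟨C, hC⟩ := CStarAlgebra.nonneg_iff_eq_star_mul_self.mp hY.nonneg
    exact ⟨C, hC⟩
  have key : (Bᴴ * B * (Cᴴ * C)).trace = ((C * Bᴴ)ᴴ * (C * Bᴴ)).trace := by
    rw [Matrix.conjTranspose_mul, Matrix.conjTranspose_conjTranspose]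
    rw [show Bᴴ * B * (Cᴴ * C) = Bᴴ * (B * Cᴴ * C) by noncomm_ring]
    rw [Matrix.trace_mul_comm, show B * Cᴴ * C * Bᴴ = B * Cᴴ * (C * Bᴴ) by noncomm_ring]
  rw [key] at h
  have hCB : C * Bᴴ = 0 := eq_zero_of_trace_conjTranspose_mul_self _ h
  calc Bᴴ * B * (Cᴴ * C) = Bᴴ * (C * Bᴴ)ᴴ * C := by
        rw [Matrix.conjTranspose_mul, Matrix.conjTranspose_conjTranspose]; noncomm_ring
    _ = 0 := by rw [hCB]; simp

lemma psd_smul {X : Matrix (Fin d) (Fin d) ℂ} (hX : X.PosSemidef) {r : ℝ} (hr : 0 ≤ r) :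
    ((r : ℂ) • X).PosSemidef := by
  rw [Matrix.posSemidef_iff_dotProduct_mulVec]
  constructor
  · rw [Matrix.IsHermitian, Matrix.conjTranspose_smul, hX.1.eq]
    congr 1
    simp [Complex.ext_iff]
  · intro x
    rw [Matrix.smul_mulVec, dotProduct_smul]
    exact smul_nonneg (by exact_mod_cast Complex.zero_le_real.mpr hr) (hX.dotProduct_mulVec_nonneg x)

lemma psd_sum {α : Type*} (s : Finset α) (f : α → Matrix (Fin d) (Fin d) ℂ)
    (hf : ∀ a ∈ s, (f a).PosSemidef) : (∑ a ∈ s, f a).PosSemidef := by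
  classical
  induction s using Finset.induction with
  | empty => simpa using Matrix.PosSemidef.zero
  | insert a s hnotmem ih =>
    rw [Finset.sum_insert hnotmem]
    exact ((hf _ (Finset.mem_insert_self _ _)).add
      (ih fun a ha => hf a (Finset.mem_insert_of_mem ha)))

lemma complex_eq_re_of_nonneg {z : ℂ} (h : 0 ≤ z) : z = (z.re : ℂ) := by
  have him : z.im = 0 := by
    have := Complex.le_def.mp h
    simpa using this.2.symm
  exact Complex.ext (by simp) (by simp [him])

lemma re_nonneg_of_nonneg {z : ℂ} (h : 0 ≤ z) : 0 ≤ z.re := by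
  have := Complex.le_def.mp h
  simpa using this.1

lemma mul_vecMulVec (X : Matrix (Fin d) (Fin d) ℂ) (a b : Fin d → ℂ) :
    X * Matrix.vecMulVec a b = Matrix.vecMulVec (X *ᵥ a) b := by
  ext i j
  simp [Matrix.mul_apply, Matrix.vecMulVec_apply, Matrix.mulVec, dotProduct,
    Finset.sum_mul, mul_assoc]

lemma vecMulVec_mulVec (u : Fin d → ℂ) (x : Fin d → ℂ) :
    Matrix.vecMulVec u (star u) *ᵥ x = (star u ⬝ᵥ x) • u := by
  funext i
  simp [Matrix.mulVec, Matrix.vecMulVec_apply, dotProduct, Finset.mul_sum,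
    mul_assoc, mul_comm, mul_left_comm]

lemma smul_vecMulVec (c : ℂ) (a b : Fin d → ℂ) :
    Matrix.vecMulVec (c • a) b = c • Matrix.vecMulVec a b := by
  ext i j
  simp [Matrix.vecMulVec_apply, mul_assoc]

lemma vecMulVec_conjTranspose (u : Fin d → ℂ) :
    (Matrix.vecMulVec u (star u))ᴴ = Matrix.vecMulVec u (star u) := by
  ext i j
  simp [Matrix.conjTranspose_apply, Matrix.vecMulVec_apply, mul_comm]

lemma vecMulVec_mul_vecMulVec (u : Fin d → ℂ) (hu : star u ⬝ᵥ u = 1) :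
    Matrix.vecMulVec u (star u) * Matrix.vecMulVec u (star u) = Matrix.vecMulVec u (star u) := by
  rw [mul_vecMulVec, vecMulVec_mulVec, hu, one_smul]

lemma vecMulVec_posSemidef (u : Fin d → ℂ) :
    (Matrix.vecMulVec u (star u)).PosSemidef := by
  refine Matrix.PosSemidef.of_dotProduct_mulVec_nonneg (vecMulVec_conjTranspose u) fun x => ?_
  rw [vecMulVec_mulVec, dotProduct_smul]
  have h : star x ⬝ᵥ u = star (star u ⬝ᵥ x) := by
    rw [star_dotProduct]
  rw [h, smul_eq_mul]
  exact mul_star_self_nonneg _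

lemma one_sub_vecMulVec_posSemidef (u : Fin d → ℂ) (hu : star u ⬝ᵥ u = 1) :
    (1 - Matrix.vecMulVec u (star u)).PosSemidef := by
  have hherm : (1 - Matrix.vecMulVec u (star u))ᴴ = 1 - Matrix.vecMulVec u (star u) := by
    rw [Matrix.conjTranspose_sub, Matrix.conjTranspose_one, vecMulVec_conjTranspose]
  have hidem : (1 - Matrix.vecMulVec u (star u)) * (1 - Matrix.vecMulVec u (star u))
      = 1 - Matrix.vecMulVec u (star u) := by
    rw [Matrix.sub_mul, Matrix.mul_sub, Matrix.mul_sub, vecMulVec_mul_vecMulVec u hu]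
    simp only [Matrix.one_mul, Matrix.mul_one]
    abel
  have h : 1 - Matrix.vecMulVec u (star u)
      = (1 - Matrix.vecMulVec u (star u))ᴴ * (1 - Matrix.vecMulVec u (star u)) := by
    rw [hherm, hidem]
  rw [h]
  exact Matrix.posSemidef_conjTranspose_mul_self _

lemma trace_mul_vecMulVec (X : Matrix (Fin d) (Fin d) ℂ) (u : Fin d → ℂ) :
    (X * Matrix.vecMulVec u (star u)).trace = star u ⬝ᵥ (X *ᵥ u) := by
  simp only [Matrix.trace, Matrix.diag_apply, Matrix.mul_apply, Matrix.vecMulVec_apply,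
    dotProduct, Matrix.mulVec, Pi.star_apply]
  congr 1
  funext i
  rw [Finset.mul_sum]
  congr 1
  funext k
  ring

/-- From a state `σ` and an effect `N ≤ 1` with `tr (σ N) = 1`, produce a unit
vector fixed by `N`. -/
lemma exists_unit_fixed {σ N : Matrix (Fin d) (Fin d) ℂ}
    (hσ : σ.PosSemidef) (hσtr : σ.trace = 1) (hN : N.PosSemidef)
    (hQ : (1 - N).PosSemidef) (h1 : (σ * N).trace = 1) :
    ∃ u : Fin d → ℂ, N *ᵥ u = u ∧ star u ⬝ᵥ u = 1 := by
  have htr0 : (σ * (1 - N)).trace = 0 := by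
    rw [Matrix.mul_sub, Matrix.mul_one, Matrix.trace_sub, hσtr, h1, sub_self]
  have hz : σ * (1 - N) = 0 := mul_eq_zero_of_trace_zero hσ hQ htr0
  have hσN : σ * N = σ := by
    rw [Matrix.mul_sub, Matrix.mul_one, sub_eq_zero] at hz
    exact hz.symm
  have hNσ : N * σ = σ := by
    have h2 := congrArg Matrix.conjTranspose hσN
    rwa [Matrix.conjTranspose_mul, hN.1.eq, hσ.1.eq] at h2
  have hσne : σ ≠ 0 := by
    intro h
    rw [h, Matrix.trace_zero] at hσtr
    exact one_ne_zero hσtr.symm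
  have hv : ∃ v, σ *ᵥ v ≠ 0 := by
    by_contra hc
    push_neg at hc
    apply hσne
    ext i j
    have := congrFun (hc (Pi.single j 1)) i
    rw [Matrix.mulVec_single] at this
    simpa using this
  obtain ⟨v, hv⟩ := hv
  have hNw : N *ᵥ (σ *ᵥ v) = σ *ᵥ v := by rw [Matrix.mulVec_mulVec, hNσ]
  have hc0 : star (σ *ᵥ v) ⬝ᵥ (σ *ᵥ v) ≠ 0 :=
    fun h => hv (dotProduct_star_self_eq_zero.mp h)
  have hcnn : 0 ≤ star (σ *ᵥ v) ⬝ᵥ (σ *ᵥ v) := dotProduct_star_self_nonneg _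
  set c : ℝ := (star (σ *ᵥ v) ⬝ᵥ (σ *ᵥ v)).re with hcdef
  have hceq : star (σ *ᵥ v) ⬝ᵥ (σ *ᵥ v) = (c : ℂ) := complex_eq_re_of_nonneg hcnn
  have hcpos : 0 < c := by
    rcases lt_or_eq_of_le (re_nonneg_of_nonneg hcnn) with h | h
    · exact h
    · exfalso; apply hc0; rw [hceq]
      norm_cast
      rw [hcdef]
      exact h.symm
  refine ⟨(((Real.sqrt c)⁻¹ : ℝ) : ℂ) • (σ *ᵥ v), ?_, ?_⟩
  · rw [Matrix.mulVec_smul, hNw]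
  · rw [star_smul, smul_dotProduct, dotProduct_smul, hceq]
    have hst : star ((((Real.sqrt c)⁻¹ : ℝ) : ℂ)) = (((Real.sqrt c)⁻¹ : ℝ) : ℂ) := by
      simp [Complex.ext_iff]
    rw [hst, smul_eq_mul, smul_eq_mul]
    have : ((Real.sqrt c)⁻¹ : ℝ) * ((Real.sqrt c)⁻¹ * c) = 1 := by
      rw [← mul_assoc, ← mul_inv]
      rw [Real.mul_self_sqrt hcpos.le]
      exact inv_mul_cancel₀ (ne_of_gt hcpos)
    exact_mod_cast congrArg (fun r : ℝ => (r : ℂ)) this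

/-- Trace lower bound and rank-one identification for an effect with a unit
fixed vector. -/
lemma trace_sub_one_nonneg {N : Matrix (Fin d) (Fin d) ℂ} (hN : N.PosSemidef)
    {u : Fin d → ℂ} (hNu : N *ᵥ u = u) (hu : star u ⬝ᵥ u = 1) :
    0 ≤ N.trace - 1 := by
  have htrNP : (N * Matrix.vecMulVec u (star u)).trace = 1 := by
    rw [trace_mul_vecMulVec, hNu, hu]
  have hNQ : 0 ≤ (N * (1 - Matrix.vecMulVec u (star u))).trace :=
    trace_mul_psd_nonneg hN (one_sub_vecMulVec_posSemidef u hu)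
  have hexp : (N * (1 - Matrix.vecMulVec u (star u))).trace = N.trace - 1 := by
    rw [Matrix.mul_sub, Matrix.mul_one, Matrix.trace_sub, htrNP]
  rwa [hexp] at hNQ

lemma eq_vecMulVec_of_trace_one {N : Matrix (Fin d) (Fin d) ℂ} (hN : N.PosSemidef)
    {u : Fin d → ℂ} (hNu : N *ᵥ u = u) (hu : star u ⬝ᵥ u = 1) (h1 : N.trace = 1) :
    N = Matrix.vecMulVec u (star u) := by
  have htrNP : (N * Matrix.vecMulVec u (star u)).trace = 1 := by
    rw [trace_mul_vecMulVec, hNu, hu]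
  have h0 : (N * (1 - Matrix.vecMulVec u (star u))).trace = 0 := by
    rw [Matrix.mul_sub, Matrix.mul_one, Matrix.trace_sub, htrNP, h1, sub_self]
  have hz := mul_eq_zero_of_trace_zero hN (one_sub_vecMulVec_posSemidef u hu) h0
  rw [Matrix.mul_sub, Matrix.mul_one, sub_eq_zero] at hz
  rw [hz, mul_vecMulVec, hNu]

/-- Rank-one domination: a PSD matrix below a unit rank-one projection is a
multiple of it. -/
lemma dominated_eq_smul {u : Fin d → ℂ} (hu : star u ⬝ᵥ u = 1)
    {X : Matrix (Fin d) (Fin d) ℂ} (hX : X.PosSemidef)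
    (hdom : (Matrix.vecMulVec u (star u) - X).PosSemidef) :
    X = (star u ⬝ᵥ (X *ᵥ u)) • Matrix.vecMulVec u (star u) := by
  have h1 : 0 ≤ (X * (1 - Matrix.vecMulVec u (star u))).trace :=
    trace_mul_psd_nonneg hX (one_sub_vecMulVec_posSemidef u hu)
  have h2 : 0 ≤ ((Matrix.vecMulVec u (star u) - X) * (1 - Matrix.vecMulVec u (star u))).trace :=
    trace_mul_psd_nonneg hdom (one_sub_vecMulVec_posSemidef u hu)
  have hP0 : (Matrix.vecMulVec u (star u) * (1 - Matrix.vecMulVec u (star u))).trace = 0 := by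
    rw [Matrix.mul_sub, Matrix.mul_one, vecMulVec_mul_vecMulVec u hu, sub_self,
      Matrix.trace_zero]
  have h3 : ((Matrix.vecMulVec u (star u) - X) * (1 - Matrix.vecMulVec u (star u))).trace
      = -(X * (1 - Matrix.vecMulVec u (star u))).trace := by
    rw [Matrix.sub_mul, Matrix.trace_sub, hP0]
    ring
  rw [h3] at h2
  have h4 : (X * (1 - Matrix.vecMulVec u (star u))).trace = 0 :=
    le_antisymm (neg_nonneg.mp h2) h1
  have hz : X * (1 - Matrix.vecMulVec u (star u)) = 0 :=
    mul_eq_zero_of_trace_zero hX (one_sub_vecMulVec_posSemidef u hu) h4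
  rw [Matrix.mul_sub, Matrix.mul_one, sub_eq_zero] at hz
  -- hz : X = X * P
  have hPX : Matrix.vecMulVec u (star u) * X = X := by
    have h5 := congrArg Matrix.conjTranspose hz
    rwa [Matrix.conjTranspose_mul, hX.1.eq, vecMulVec_conjTranspose, eq_comm] at h5
  calc X = Matrix.vecMulVec u (star u) * (X * Matrix.vecMulVec u (star u)) := by
        rw [← hz, hPX]
    _ = Matrix.vecMulVec u (star u) * Matrix.vecMulVec (X *ᵥ u) (star u) := by
        rw [mul_vecMulVec]
    _ = Matrix.vecMulVec ((star u ⬝ᵥ (X *ᵥ u)) • u) (star u) := by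
        rw [mul_vecMulVec, vecMulVec_mulVec]
    _ = (star u ⬝ᵥ (X *ᵥ u)) • Matrix.vecMulVec u (star u) := smul_vecMulVec _ _ _

/-- Pairwise orthogonality of trace-one idempotent PSD matrices summing to 1. -/
lemma pairwise_orthogonal (N : Fin d → Matrix (Fin d) (Fin d) ℂ)
    (hpsd : ∀ k, (N k).PosSemidef) (hsum : ∑ k, N k = 1)
    (hidem : ∀ k, N k * N k = N k) (htr : ∀ k, (N k).trace = 1) :
    ∀ k k', k ≠ k' → N k * N k' = 0 := by
  intro k k' hne
  have hsum' : ∑ k'', (N k * N k'').trace = 1 := by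
    rw [← Matrix.trace_sum, ← Matrix.mul_sum, hsum, Matrix.mul_one, htr k]
  have hterm : (N k * N k).trace = 1 := by rw [hidem k, htr k]
  have hrest : ∑ k'' ∈ Finset.univ.erase k, (N k * N k'').trace = 0 := by
    rw [← Finset.sum_erase_add _ _ (Finset.mem_univ k), hterm] at hsum'
    linear_combination hsum'
  have hz : (N k * N k').trace = 0 := by
    have hnn : ∀ x ∈ Finset.univ.erase k, 0 ≤ (N k * N x).trace :=
      fun x _ => trace_mul_psd_nonneg (hpsd k) (hpsd x)
    exact (Finset.sum_eq_zero_iff_of_nonneg hnn).mp hrest k'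
      (Finset.mem_erase.mpr ⟨hne.symm, Finset.mem_univ k'⟩)
  exact mul_eq_zero_of_trace_zero (hpsd k) (hpsd k') hz

end IdClassMaximalAux


open IdClassMaximalAux

/-- if a quantum-implementable matrix `A` (in dimension `d`)
ultraweakly majorizes `I_d`, then `A` is also majorized by `I_d`, i.e. the
class of `I_d` is maximal among quantum communication matrices. -/
theorem id_class_maximal (d m n : ℕ) (hd : 1 ≤ d)
    (A : Matrix (Fin m) (Fin n) ℝ) (hA : RowStochastic A)
    (hQ : QuantumImpl d m n A)
    (hmaj : UWMaj (1 : Matrix (Fin d) (Fin d) ℝ) A) :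
    UWMaj A (1 : Matrix (Fin d) (Fin d) ℝ) := by
  classical
  obtain ⟨ρ, M, hρ, hMpsd, hMsum, hAij⟩ := hQ
  obtain ⟨L, R, hL, hR, hLAR⟩ := hmaj
  have hAij' : ∀ i j, (ρ i * M j).trace = ((A i j : ℝ) : ℂ) := by
    intro i j
    rw [hAij i j]
    exact complex_eq_re_of_nonneg (trace_mul_psd_nonneg (hρ i).1 (hMpsd j))
  set N : Fin d → Matrix (Fin d) (Fin d) ℂ := fun k => ∑ j, ((R j k : ℝ) : ℂ) • M j with hNdef
  set σ : Fin d → Matrix (Fin d) (Fin d) ℂ := fun k => ∑ i, ((L k i : ℝ) : ℂ) • ρ i with hσdef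
  have hNpsd : ∀ k, (N k).PosSemidef := fun k =>
    psd_sum _ _ fun j _ => psd_smul (hMpsd j) (hR.1 j k)
  have hσpsd : ∀ k, (σ k).PosSemidef := fun k =>
    psd_sum _ _ fun i _ => psd_smul (hρ i).1 (hL.1 k i)
  have hNsum : ∑ k, N k = 1 := by
    simp only [hNdef]
    rw [Finset.sum_comm]
    have hcol : ∀ j : Fin n, ∑ k, ((R j k : ℝ) : ℂ) • M j = M j := by
      intro j
      rw [← Finset.sum_smul]
      have hc : ∑ k, ((R j k : ℝ) : ℂ) = ((∑ k, R j k : ℝ) : ℂ) := by push_cast; ring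
      rw [hc, hR.2 j]
      simp
    rw [Finset.sum_congr rfl fun j _ => hcol j, hMsum]
  have hσtr : ∀ k, (σ k).trace = 1 := by
    intro k
    simp only [hσdef]
    rw [Matrix.trace_sum]
    have ht : ∀ i : Fin m, ((((L k i : ℝ) : ℂ)) • ρ i).trace = ((L k i : ℝ) : ℂ) := by
      intro i
      rw [Matrix.trace_smul, (hρ i).2, smul_eq_mul, mul_one]
    rw [Finset.sum_congr rfl fun i _ => ht i]
    have hc : ∑ i, ((L k i : ℝ) : ℂ) = ((∑ i, L k i : ℝ) : ℂ) := by push_cast; ring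
    rw [hc, hL.2 k]
    simp
  have hσN1 : ∀ k, (σ k * N k).trace = 1 := by
    intro k
    have hmm : σ k * N k
        = ∑ i, ∑ j, (((L k i : ℝ) : ℂ) * ((R j k : ℝ) : ℂ)) • (ρ i * M j) := by
      simp only [hσdef, hNdef, Finset.sum_mul_sum, smul_mul_smul_comm]
    have hreal : (L * A * R) k k = ∑ i, ∑ j, L k i * R j k * A i j := by
      simp only [Matrix.mul_apply, Finset.sum_mul]
      rw [Finset.sum_comm]
      exact Finset.sum_congr rfl fun i _ => Finset.sum_congr rfl fun j _ => by ring
    calc (σ k * N k).trace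
        = ∑ i, ∑ j, ((L k i : ℝ) : ℂ) * ((R j k : ℝ) : ℂ) * ((A i j : ℝ) : ℂ) := by
          rw [hmm, Matrix.trace_sum]
          refine Finset.sum_congr rfl fun i _ => ?_
          rw [Matrix.trace_sum]
          refine Finset.sum_congr rfl fun j _ => ?_
          rw [Matrix.trace_smul, hAij' i j, smul_eq_mul]
      _ = (((L * A * R) k k : ℝ) : ℂ) := by
          rw [hreal]
          push_cast
          ring
      _ = 1 := by
          rw [hLAR]
          norm_cast
          exact Matrix.one_apply_eq k
  have h1N : ∀ k, (1 - N k).PosSemidef := by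
    intro k
    have he : 1 - N k = ∑ k' ∈ Finset.univ.erase k, N k' := by
      rw [← hNsum, ← Finset.sum_erase_add _ _ (Finset.mem_univ k)]
      abel
    rw [he]
    exact psd_sum _ _ fun k' _ => hNpsd k'
  have hufix' := fun k => exists_unit_fixed (hσpsd k) (hσtr k) (hNpsd k) (h1N k) (hσN1 k)
  choose u hufix hunit using hufix'
  have htrsum : ∑ k, (N k).trace = (d : ℂ) := by
    rw [← Matrix.trace_sum, hNsum, Matrix.trace_one]
    simp
  have hsub0 : ∑ k, ((N k).trace - 1) = 0 := by
    rw [Finset.sum_sub_distrib, htrsum]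
    simp
  have htr1 : ∀ k, (N k).trace = 1 := by
    intro k
    have h := (Finset.sum_eq_zero_iff_of_nonneg fun k _ =>
      trace_sub_one_nonneg (hNpsd k) (hufix k) (hunit k)).mp hsub0 k (Finset.mem_univ k)
    exact sub_eq_zero.mp h
  have hNP : ∀ k, N k = Matrix.vecMulVec (u k) (star (u k)) :=
    fun k => eq_vecMulVec_of_trace_one (hNpsd k) (hufix k) (hunit k) (htr1 k)
  have hNN : ∀ k, N k * N k = N k := by
    intro k
    rw [hNP k]
    exact vecMulVec_mul_vecMulVec _ (hunit k)
  have horth : ∀ k k', k ≠ k' → N k * N k' = 0 :=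
    pairwise_orthogonal N hNpsd hNsum hNN htr1
  have hk0' : ∀ j, ∃ k, 0 < R j k := by
    intro j
    by_contra hc
    push_neg at hc
    have h0 : ∑ k, R j k = 0 := Finset.sum_eq_zero fun k _ => le_antisymm (hc k) (hR.1 j k)
    rw [hR.2 j] at h0
    exact one_ne_zero h0
  choose k0 hk0 using hk0'
  have hMj : ∀ j, ∃ r : ℝ, 0 ≤ r ∧ M j = ((r : ℝ) : ℂ) • N (k0 j) := by
    intro j
    have hdom : (N (k0 j) - ((R j (k0 j) : ℝ) : ℂ) • M j).PosSemidef := by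
      have he : N (k0 j) - ((R j (k0 j) : ℝ) : ℂ) • M j
          = ∑ j' ∈ Finset.univ.erase j, ((R j' (k0 j) : ℝ) : ℂ) • M j' := by
        simp only [hNdef]
        rw [← Finset.sum_erase_add _ _ (Finset.mem_univ j)]
        abel
      rw [he]
      exact psd_sum _ _ fun j' _ => psd_smul (hMpsd j') (hR.1 j' (k0 j))
    rw [hNP (k0 j)] at hdom
    have hXpsd : (((R j (k0 j) : ℝ) : ℂ) • M j).PosSemidef :=
      psd_smul (hMpsd j) (hR.1 j (k0 j))
    have hkey := dominated_eq_smul (hunit (k0 j)) hXpsd hdom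
    rw [← hNP (k0 j), Matrix.smul_mulVec, dotProduct_smul, smul_eq_mul,
      mul_smul] at hkey
    have hcnn : 0 ≤ star (u (k0 j)) ⬝ᵥ (M j *ᵥ u (k0 j)) := (hMpsd j).dotProduct_mulVec_nonneg (u (k0 j))
    have hRne : ((R j (k0 j) : ℝ) : ℂ) ≠ 0 := by
      simpa using ne_of_gt (hk0 j)
    have hMeq : M j = (star (u (k0 j)) ⬝ᵥ (M j *ᵥ u (k0 j))) • N (k0 j) :=
      smul_right_injective _ hRne hkey
    refine ⟨(star (u (k0 j)) ⬝ᵥ (M j *ᵥ u (k0 j))).re, re_nonneg_of_nonneg hcnn, ?_⟩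
    rw [← complex_eq_re_of_nonneg hcnn]
    exact hMeq
  choose r hrnn hMjeq using hMj
  refine ⟨Matrix.of fun i k => ((ρ i * N k).trace).re,
          Matrix.of fun k j => ((N k * M j).trace).re, ⟨?_, ?_⟩, ⟨?_, ?_⟩, ?_⟩
  · intro i k
    exact re_nonneg_of_nonneg (trace_mul_psd_nonneg (hρ i).1 (hNpsd k))
  · intro i
    simp only [Matrix.of_apply]
    rw [← Complex.re_sum, ← Matrix.trace_sum, ← Matrix.mul_sum, hNsum, Matrix.mul_one,
      (hρ i).2]
    simp
  · intro k j
    exact re_nonneg_of_nonneg (trace_mul_psd_nonneg (hNpsd k) (hMpsd j))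
  · intro k
    simp only [Matrix.of_apply]
    rw [← Complex.re_sum, ← Matrix.trace_sum, ← Matrix.mul_sum, hMsum, Matrix.mul_one,
      htr1 k]
    simp
  · ext i j
    rw [Matrix.mul_one, Matrix.mul_apply]
    rw [Finset.sum_eq_single (k0 j)]
    · simp only [Matrix.of_apply]
      rw [hAij i j, hMjeq j, mul_smul_comm, Matrix.trace_smul, mul_smul_comm,
        Matrix.trace_smul, hNN (k0 j), htr1 (k0 j), smul_eq_mul, smul_eq_mul, mul_one,
        Complex.re_ofReal_mul, Complex.ofReal_re]
      ring
    · intro k _ hkne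
      simp only [Matrix.of_apply]
      rw [hMjeq j, mul_smul_comm, Matrix.trace_smul, horth k (k0 j) hkne,
        Matrix.trace_zero, smul_eq_mul, mul_zero]
      simp
    · intro h
      exact absurd (Finset.mem_univ _) h
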